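/- For all nonnegative integers m, n, k, r with n ≥ m + k, one has C(m+k, m) · T_r(n+r, m+k+r) = ∑_{l=m}^{n-k} C(n,l) · T_r(l+r, m+r) · T(n-l, k). -/
import Mathlib


/-- The central factorial numbers of the second kind:
`T(n,k) = (1/k!) ∑_{j=0}^{k} (-1)^{k-j} C(k,j) (j - k/2)^n`. -/
noncomputable def centralT (n k : ℕ) : ℝ :=
  (1 / (Nat.factorial k : ℝ)) * ∑ j ∈ Finset.range (k + 1),
    (-1 : ℝ) ^ (k - j) * (Nat.choose k j : ℝ) * ((j : ℝ) - (k : ℝ) / 2) ^ n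

/-- The extended `r`-central factorial numbers of the second kind:
`T_r(n+r,k+r) = (1/k!) ∑_{j=0}^{k} (-1)^{k-j} C(k,j) (j + r - k/2)^n`. -/
noncomputable def rcentralT (r n k : ℕ) : ℝ :=
  (1 / (Nat.factorial k : ℝ)) * ∑ j ∈ Finset.range (k + 1),
    (-1 : ℝ) ^ (k - j) * (Nat.choose k j : ℝ) * ((j : ℝ) + (r : ℝ) - (k : ℝ) / 2) ^ n

open Finset Function fwdDiff

lemma sum_form (K : ℕ) (f : ℝ → ℝ) (y : ℝ) :
    (fwdDiff (1:ℝ))^[K] f y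
      = ∑ s ∈ Finset.range (K + 1), (-1 : ℝ) ^ (K - s) * (K.choose s : ℝ) * f (y + s) := by
  rw [fwdDiff_iter_eq_sum_shift]
  refine Finset.sum_congr rfl fun s _ => ?_
  have : (s • (1:ℝ)) = (s : ℝ) := by simp
  rw [this, zsmul_eq_mul]
  push_cast
  ring

lemma vanish (n : ℕ) : ∀ K, n < K → ∀ (c y : ℝ),
    (fwdDiff (1:ℝ))^[K] (fun x ↦ (x + c) ^ n) y = 0 := by
  induction n using Nat.strong_induction_on with
  | _ n IH =>
    intro K hK c y
    obtain ⟨K, rfl⟩ : ∃ K', K = K' + 1 := ⟨K - 1, by omega⟩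
    rw [Function.iterate_succ_apply]
    have hd : fwdDiff (1:ℝ) (fun x ↦ (x + c) ^ n)
        = ∑ i ∈ Finset.range n, (fun x : ℝ ↦ (n.choose i : ℝ) * (x + c) ^ i) := by
      ext x
      simp only [fwdDiff, Finset.sum_apply]
      have h1 : (x + 1 + c) = (x + c) + 1 := by ring
      rw [h1, add_pow, Finset.sum_range_succ]
      simp only [one_pow, mul_one, Nat.choose_self, Nat.cast_one, Nat.sub_self, pow_zero]
      rw [add_sub_cancel_right]
      exact Finset.sum_congr rfl fun i _ => by ring
    rw [hd, fwdDiff_iter_finset_sum]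
    rw [Finset.sum_apply]
    refine Finset.sum_eq_zero fun i hi => ?_
    have hin := Finset.mem_range.mp hi
    have hsm : (fun x : ℝ ↦ (n.choose i : ℝ) * (x + c) ^ i)
        = (n.choose i : ℝ) • (fun x : ℝ ↦ (x + c) ^ i) := by ext x; simp
    rw [hsm, fwdDiff_iter_const_smul]
    have := IH i hin K (by omega) c y
    simp [this]

lemma rcentralT_eq (r n k : ℕ) :
    rcentralT r n k = (1 / (k.factorial : ℝ)) *
      (fwdDiff (1:ℝ))^[k] (fun x ↦ (x + ((r:ℝ) - (k:ℝ)/2)) ^ n) 0 := by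
  rw [sum_form, rcentralT]
  congr 1
  refine Finset.sum_congr rfl fun j _ => ?_
  have : (0:ℝ) + (j:ℝ) + ((r:ℝ) - (k:ℝ)/2) = (j:ℝ) + (r:ℝ) - (k:ℝ)/2 := by ring
  rw [this]

lemma centralT_eq (n k : ℕ) :
    centralT n k = (1 / (k.factorial : ℝ)) *
      (fwdDiff (1:ℝ))^[k] (fun x ↦ (x + (-(k:ℝ)/2)) ^ n) 0 := by
  rw [sum_form, centralT]
  congr 1
  refine Finset.sum_congr rfl fun j _ => ?_
  have : (0:ℝ) + (j:ℝ) + (-(k:ℝ)/2) = (j:ℝ) - (k:ℝ)/2 := by ring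
  rw [this]

/-- For all nonnegative integers `m, n, k, r` with `n ≥ m + k`:
`C(m+k,m) · T_r(n+r, m+k+r) = ∑_{l=m}^{n-k} C(n,l) · T_r(l+r, m+r) · T(n-l, k)`. -/
theorem choose_mul_rcentralT_eq_sum (m n k r : ℕ) (h : m + k ≤ n) :
    ((m + k).choose m : ℝ) * rcentralT r n (m + k) =
      ∑ l ∈ Finset.Icc m (n - k),
        (Nat.choose n l : ℝ) * rcentralT r l m * centralT (n - l) k := by
  have hk : k ≤ n := le_trans (Nat.le_add_left k m) h
  set c : ℝ := (r:ℝ) - ((m:ℝ) + (k:ℝ))/2 with hc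
  set g : ℝ → ℝ := fun x ↦ (x + c) ^ n with hg
  -- Step A: extend the summation range
  have hA : ∑ l ∈ Finset.Icc m (n - k),
        (Nat.choose n l : ℝ) * rcentralT r l m * centralT (n - l) k
      = ∑ l ∈ Finset.range (n+1),
        (Nat.choose n l : ℝ) * rcentralT r l m * centralT (n - l) k := by
    refine Finset.sum_subset ?_ ?_
    · intro x hx
      simp only [Finset.mem_Icc] at hx
      simp only [Finset.mem_range]; omega
    · intro x hx hx'
      simp only [Finset.mem_range] at hx
      simp only [Finset.mem_Icc, not_and, not_le] at hx'
      by_cases hxm : m ≤ x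
      · have h1 : n - x < k := by have := hx' hxm; omega
        have h2 : centralT (n - x) k = 0 := by
          rw [centralT_eq, vanish (n-x) k h1]; ring
        rw [h2]; ring
      · have h2 : rcentralT r x m = 0 := by
          rw [rcentralT_eq, vanish x m (by omega)]; ring
        rw [h2]; ring
  rw [hA]
  -- binomial convolution
  have key : ∀ (x y : ℝ), ∑ l ∈ Finset.range (n+1),
      (n.choose l : ℝ) * x^l * y^(n-l) = (x+y)^n := by
    intro x y; rw [add_pow]
    exact Finset.sum_congr rfl fun l _ => by ring
  -- Step B
  have hB : ∑ l ∈ Finset.range (n+1),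
        (Nat.choose n l : ℝ) * rcentralT r l m * centralT (n - l) k
      = ∑ i ∈ Finset.range (m+1), ∑ j ∈ Finset.range (k+1),
          (1/(m.factorial:ℝ) * (1/(k.factorial:ℝ))) *
          ((-1:ℝ)^(m-i) * (m.choose i : ℝ) * ((-1:ℝ)^(k-j) * (k.choose j : ℝ))) *
          ((((i:ℝ) + (r:ℝ) - (m:ℝ)/2) + ((j:ℝ) - (k:ℝ)/2))^n) := by
    have hterm : ∀ l ∈ Finset.range (n+1),
        (Nat.choose n l : ℝ) * rcentralT r l m * centralT (n - l) k
        = ∑ i ∈ Finset.range (m+1), ∑ j ∈ Finset.range (k+1),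
            (1/(m.factorial:ℝ) * (1/(k.factorial:ℝ))) *
            ((-1:ℝ)^(m-i) * (m.choose i : ℝ) * ((-1:ℝ)^(k-j) * (k.choose j : ℝ))) *
            ((n.choose l : ℝ) * (((i:ℝ) + (r:ℝ) - (m:ℝ)/2))^l *
              (((j:ℝ) - (k:ℝ)/2))^(n-l)) := by
      intro l _
      rw [rcentralT, centralT]
      simp only [Finset.mul_sum, Finset.sum_mul]
      rw [Finset.sum_comm]
      exact Finset.sum_congr rfl fun i _ => Finset.sum_congr rfl fun j _ => by ring
    rw [Finset.sum_congr rfl hterm, Finset.sum_comm]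
    refine Finset.sum_congr rfl fun i _ => ?_
    rw [Finset.sum_comm]
    refine Finset.sum_congr rfl fun j _ => ?_
    rw [← Finset.mul_sum, key]
  rw [hB]
  -- collapse the double sum via forward differences
  have hstep : ∀ i j : ℕ,
      (((i:ℝ) + (r:ℝ) - (m:ℝ)/2) + ((j:ℝ) - (k:ℝ)/2))^n = g ((j:ℝ) + (i:ℝ)) := by
    intro i j
    have : ((i:ℝ) + (r:ℝ) - (m:ℝ)/2) + ((j:ℝ) - (k:ℝ)/2) = ((j:ℝ) + (i:ℝ)) + c := by
      rw [hc]; ring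
    rw [this, hg]
  have hC : ∑ i ∈ Finset.range (m+1), ∑ j ∈ Finset.range (k+1),
          (1/(m.factorial:ℝ) * (1/(k.factorial:ℝ))) *
          ((-1:ℝ)^(m-i) * (m.choose i : ℝ) * ((-1:ℝ)^(k-j) * (k.choose j : ℝ))) *
          ((((i:ℝ) + (r:ℝ) - (m:ℝ)/2) + ((j:ℝ) - (k:ℝ)/2))^n)
      = (1/(m.factorial:ℝ) * (1/(k.factorial:ℝ))) * (fwdDiff (1:ℝ))^[m+k] g 0 := by
    rw [Finset.sum_comm]
    have hj : ∀ j ∈ Finset.range (k+1), ∑ i ∈ Finset.range (m+1),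
          (1/(m.factorial:ℝ) * (1/(k.factorial:ℝ))) *
          ((-1:ℝ)^(m-i) * (m.choose i : ℝ) * ((-1:ℝ)^(k-j) * (k.choose j : ℝ))) *
          ((((i:ℝ) + (r:ℝ) - (m:ℝ)/2) + ((j:ℝ) - (k:ℝ)/2))^n)
        = (1/(m.factorial:ℝ) * (1/(k.factorial:ℝ))) *
          ((-1:ℝ)^(k-j) * (k.choose j : ℝ) * ((fwdDiff (1:ℝ))^[m] g ((0:ℝ) + (j:ℝ)))) := by
      intro j _
      rw [sum_form, Finset.mul_sum, Finset.mul_sum]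
      refine Finset.sum_congr rfl fun i _ => ?_
      rw [hstep i j]
      have : ((0:ℝ) + (j:ℝ) + (i:ℝ)) = ((j:ℝ) + (i:ℝ)) := by ring
      rw [this]
      ring
    rw [Finset.sum_congr rfl hj, ← Finset.mul_sum]
    congr 1
    rw [← sum_form k ((fwdDiff (1:ℝ))^[m] g) 0, ← Function.iterate_add_apply, add_comm k m]
  rw [hC]
  -- left-hand side
  have hL : rcentralT r n (m+k) = (1 / (((m+k).factorial : ℕ) : ℝ)) *
      (fwdDiff (1:ℝ))^[m+k] g 0 := by
    have hgg : (fun x : ℝ ↦ (x + ((r:ℝ) - ((((m+k):ℕ)):ℝ)/2)) ^ n) = g := by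
      funext x
      rw [hg]
      congr 1
      rw [hc]; push_cast; ring
    rw [rcentralT_eq, hgg]
  rw [hL]
  have hfac : ((m+k).choose m : ℝ) * (m.factorial : ℝ) * (k.factorial : ℝ)
      = ((m+k).factorial : ℝ) := by
    have := Nat.choose_mul_factorial_mul_factorial (Nat.le_add_right m k)
    rw [Nat.add_sub_cancel_left] at this
    exact_mod_cast this
  have hm0 : (m.factorial : ℝ) ≠ 0 := Nat.cast_ne_zero.mpr m.factorial_ne_zero
  have hk0 : (k.factorial : ℝ) ≠ 0 := Nat.cast_ne_zero.mpr k.factorial_ne_zero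
  have hmk0 : (((m+k).factorial : ℕ) : ℝ) ≠ 0 := Nat.cast_ne_zero.mpr (m+k).factorial_ne_zero
  field_simp
  linear_combination ((fwdDiff (1:ℝ))^[m+k] g 0) * hfac
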